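/- Let C be a conformal algebra. Then the left associativity identity (a∘ₙb)∘ₘc = Σ_{s≥0} (−1)^s·C(n,s)·a∘_{n−s}(b∘_{m+s}c) holds for all a,b,c ∈ C and all n,m ∈ ℕ if and only if the right associativity identity a∘ₙ(b∘ₘc) = Σ_{s≥0} C(n,s)·(a∘_{n−s}b)∘_{m+s}c holds for all a,b,c ∈ C and all n,m ∈ ℕ. -/

import Mathlib

/-! ### Conformal algebras: basic definitions -/

/-- A conformal algebra over a field `k`: a `k`-vector space with a linear map `D`
and a family of bilinear `n`-th products satisfying (C1) locality, (C2) and (C3). -/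
structure ConfAlg (k : Type) [Field k] (C : Type) [AddCommGroup C] [Module k C] where
  Dmap : C →ₗ[k] C
  prod : ℕ → C →ₗ[k] C →ₗ[k] C
  locality : ∀ a b : C, ∃ N : ℕ, ∀ m, N ≤ m → prod m a b = 0
  axC2 : ∀ (m : ℕ) (a b : C), prod m (Dmap a) b = -((m : k)) • prod (m - 1) a b
  axC3 : ∀ (m : ℕ) (a b : C),
    prod m a (Dmap b) = Dmap (prod m a b) + (m : k) • prod (m - 1) a b

section BasicDefs

variable {k : Type} [Field k] {C : Type} [AddCommGroup C] [Module k C]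

/-- Left associativity identity for a conformal algebra. -/
def ConfAlg.IsAssoc (A : ConfAlg k C) : Prop :=
  ∀ (nn m : ℕ) (a b c : C),
    A.prod m (A.prod nn a b) c =
      ∑ s ∈ Finset.range (nn + 1),
        ((-1 : k) ^ s * (nn.choose s : k)) • A.prod (nn - s) a (A.prod (m + s) b c)

/-- A ℤ₂-grading of a conformal algebra: `grade false` is the even part,
`grade true` the odd part. -/
structure ConfGrading (A : ConfAlg k C) where
  grade : Bool → Submodule k C
  inf_bot : grade false ⊓ grade true = ⊥
  sup_top : grade false ⊔ grade true = ⊤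
  D_mem : ∀ (i : Bool), ∀ x ∈ grade i, A.Dmap x ∈ grade i
  prod_mem : ∀ (i j : Bool) (m : ℕ) (x y : C), x ∈ grade i → y ∈ grade j →
    A.prod m x y ∈ grade (xor i j)

/-- The "conjugate" product `{b ∘ₘ a} = ∑_{s ≥ 0} ((-1)^{m+s}/s!) • Dˢ (b ∘_{m+s} a)`,
a finite sum by locality, expressed via `finsum`. -/
noncomputable def cbrR (D : C →ₗ[k] C) (P : ℕ → C →ₗ[k] C →ₗ[k] C)
    (m : ℕ) (b a : C) : C :=
  ∑ᶠ s : ℕ, ((-1 : k) ^ (m + s) * ((Nat.factorial s : k))⁻¹) • (D ^ s) (P (m + s) b a)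

/-- The super-commutator `[a ∘ₘ b] = a ∘ₘ b - (-1)^{p(a)p(b)} {b ∘ₘ a}` for homogeneous
`a, b` of parities `pa, pb` (`false` = even, `true` = odd). -/
noncomputable def sbrR (D : C →ₗ[k] C) (P : ℕ → C →ₗ[k] C →ₗ[k] C)
    (pa pb : Bool) (m : ℕ) (a b : C) : C :=
  P m a b - (if pa && pb then (-1 : k) else 1) • cbrR D P m b a

/-- The defining relations of the Lie conformal superalgebra `Wₙ`, for homogeneous
elements `V` (even), `X i`, `Pd i` (odd) of an associative conformal algebra with
derivation `D` and products `P`. -/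
noncomputable def WRelsR (D : C →ₗ[k] C) (P : ℕ → C →ₗ[k] C →ₗ[k] C) {n : ℕ}
    (V : C) (X Pd : Fin n → C) : Prop :=
  (∀ i j, sbrR D P true true 0 (X i) (X j) = - sbrR D P true true 0 (X j) (X i)) ∧
  (∀ (m : ℕ) (i j), sbrR D P true true m (Pd i) (Pd j) = 0) ∧
  (∀ i j, sbrR D P true true 0 (Pd j) (X i) = if i = j then V else 0) ∧
  (∀ i, sbrR D P false true 0 V (X i) = D (X i)) ∧
  (∀ i, sbrR D P true false 0 (X i) V = D (X i)) ∧
  (∀ i, sbrR D P true false 1 (X i) V = (2 : k) • X i) ∧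
  (∀ j, sbrR D P true false 0 (Pd j) V = 0) ∧
  (∀ j, sbrR D P true false 1 (Pd j) V = Pd j) ∧
  (∀ i j, sbrR D P true true 0 (X i) (X j)
      = ((2 : k))⁻¹ • D (sbrR D P true true 1 (X i) (X j))) ∧
  (sbrR D P false false 0 V V = D V) ∧
  (sbrR D P false false 1 V V = (2 : k) • V) ∧
  (∀ m, 2 ≤ m →
    (∀ i j, sbrR D P true true m (X i) (X j) = 0) ∧
    (∀ j, sbrR D P false true m V (Pd j) = 0) ∧
    (∀ i j, sbrR D P true true m (X i) (Pd j) = 0) ∧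
    (∀ i, sbrR D P false true m V (X i) = 0) ∧
    sbrR D P false false m V V = 0)

end BasicDefs
open Finset in
private lemma triangle_sum {M : Type*} [AddCommMonoid M] (n : ℕ) (f : ℕ → ℕ → M) :
    ∑ s ∈ range (n + 1), ∑ t ∈ range (n - s + 1), f s t
      = ∑ u ∈ range (n + 1), ∑ s ∈ range (u + 1), f s (u - s) := by
  rw [Finset.sum_sigma', Finset.sum_sigma']
  refine Finset.sum_bij' (fun (p : Σ _ : ℕ, ℕ) (_ : p ∈ _) => (⟨p.1 + p.2, p.1⟩ : Σ _ : ℕ, ℕ))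
    (fun (p : Σ _ : ℕ, ℕ) (_ : p ∈ _) => (⟨p.2, p.1 - p.2⟩ : Σ _ : ℕ, ℕ)) ?_ ?_ ?_ ?_ ?_
  · rintro ⟨a, b⟩ hp
    simp only [Finset.mem_sigma, Finset.mem_range] at hp ⊢
    omega
  · rintro ⟨a, b⟩ hp
    simp only [Finset.mem_sigma, Finset.mem_range] at hp ⊢
    omega
  · rintro ⟨a, b⟩ hp
    simp only [Finset.mem_sigma, Finset.mem_range] at hp
    have h1 : a + b - a = b := by omega
    simp [h1]
  · rintro ⟨a, b⟩ hp
    simp only [Finset.mem_sigma, Finset.mem_range] at hp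
    have h1 : b + (a - b) = a := by omega
    simp [h1]
  · rintro ⟨a, b⟩ hp
    simp only [Finset.mem_sigma, Finset.mem_range] at hp
    have : a + b - a = b := by omega
    simp [this]

open Finset in
private lemma binom_inv {k : Type} [Field k] [CharZero k] {C : Type} [AddCommGroup C]
    [Module k C] (ε : k) (hε : ε * ε = 1) (F G : ℕ → ℕ → C)
    (h : ∀ n m, F n m = ∑ s ∈ range (n + 1),
        (ε ^ s * (n.choose s : k)) • G (n - s) (m + s)) :
    ∀ n m, G n m = ∑ s ∈ range (n + 1),
        ((-ε) ^ s * (n.choose s : k)) • F (n - s) (m + s) := by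
  intro n m
  have key : ∑ s ∈ range (n + 1), ((-ε) ^ s * (n.choose s : k)) • F (n - s) (m + s)
      = ∑ u ∈ range (n + 1),
          (∑ s ∈ range (u + 1),
            (-ε) ^ s * ε ^ (u - s) * (n.choose s : k) * ((n - s).choose (u - s) : k)) •
            G (n - u) (m + u) := by
    have h1 : ∀ s ∈ range (n + 1),
        ((-ε) ^ s * (n.choose s : k)) • F (n - s) (m + s)
          = ∑ t ∈ range (n - s + 1),
              ((-ε) ^ s * ε ^ t * (n.choose s : k) * ((n - s).choose t : k)) •
                G (n - (s + t)) (m + (s + t)) := by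
      intro s hs
      rw [h (n - s) (m + s), Finset.smul_sum]
      refine Finset.sum_congr rfl fun t ht => ?_
      rw [smul_smul]
      simp only [Finset.mem_range] at hs ht
      have e1 : n - s - t = n - (s + t) := by omega
      have e2 : m + s + t = m + (s + t) := by omega
      rw [e1, e2]; ring_nf
    rw [Finset.sum_congr rfl h1,
      triangle_sum n (fun s t =>
        ((-ε) ^ s * ε ^ t * (n.choose s : k) * ((n - s).choose t : k)) •
          G (n - (s + t)) (m + (s + t)))]
    refine Finset.sum_congr rfl fun u hu => ?_
    rw [Finset.sum_smul]
    refine Finset.sum_congr rfl fun s hs => ?_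
    simp only [Finset.mem_range] at hs
    have e : s + (u - s) = u := by omega
    rw [e]
  rw [key]
  have coeff : ∀ u ∈ range (n + 1),
      (∑ s ∈ range (u + 1),
          (-ε) ^ s * ε ^ (u - s) * (n.choose s : k) * ((n - s).choose (u - s) : k))
        = if u = 0 then 1 else 0 := by
    intro u hu
    simp only [Finset.mem_range] at hu
    have hu' : u ≤ n := by omega
    have step : ∀ s ∈ range (u + 1),
        (-ε) ^ s * ε ^ (u - s) * (n.choose s : k) * ((n - s).choose (u - s) : k)
          = (ε ^ u * (n.choose u : k)) * ((-1) ^ s * (u.choose s : k)) := by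
      intro s hs
      simp only [Finset.mem_range] at hs
      have hs' : s ≤ u := by omega
      have hch : (n.choose u : k) * (u.choose s : k)
          = (n.choose s : k) * ((n - s).choose (u - s) : k) := by
        rw [← Nat.cast_mul, ← Nat.cast_mul, Nat.choose_mul (n := n) hs']
      have hpow : (-ε) ^ s * ε ^ (u - s) = (-1) ^ s * ε ^ u := by
        rw [neg_pow, mul_assoc, ← pow_add]
        congr 2
        omega
      calc (-ε) ^ s * ε ^ (u - s) * (n.choose s : k) * ((n - s).choose (u - s) : k)
          = ((-1) ^ s * ε ^ u) * ((n.choose s : k) * ((n - s).choose (u - s) : k)) := by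
            rw [hpow]; ring
        _ = ((-1) ^ s * ε ^ u) * ((n.choose u : k) * (u.choose s : k)) := by rw [hch]
        _ = (ε ^ u * (n.choose u : k)) * ((-1) ^ s * (u.choose s : k)) := by ring
    rw [Finset.sum_congr rfl step, ← Finset.mul_sum]
    have halt : (∑ s ∈ range (u + 1), ((-1 : k) ^ s * (u.choose s : k)))
        = if u = 0 then 1 else 0 := by
      by_cases h0 : u = 0
      · subst h0; simp
      · rw [if_neg h0]
        have h2 := Int.alternating_sum_range_choose_of_ne h0
        have h3 : ((∑ m ∈ Finset.range (u + 1), ((-1) ^ m * u.choose m : ℤ) : ℤ) : k) = 0 := by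
          rw [h2]; simp
        push_cast at h3
        exact h3
    rw [halt]
    by_cases h0 : u = 0
    · subst h0; simp
    · simp [h0]
  rw [Finset.sum_congr rfl fun u hu => by rw [coeff u hu]]
  rw [Finset.sum_eq_single 0]
  · simp
  · intro u _ hu; simp [hu]
  · intro habs; simp at habs

/-- the left associativity identity holds for all `a,b,c` and all `n,m`
iff the right associativity identity does. -/
theorem stmt_0 {k : Type} [Field k] [CharZero k] {C : Type} [AddCommGroup C] [Module k C]
    (A : ConfAlg k C) :
    (∀ (nn m : ℕ) (a b c : C),
        A.prod m (A.prod nn a b) c =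
          ∑ s ∈ Finset.range (nn + 1),
            ((-1 : k) ^ s * (nn.choose s : k)) • A.prod (nn - s) a (A.prod (m + s) b c)) ↔
    (∀ (nn m : ℕ) (a b c : C),
        A.prod nn a (A.prod m b c) =
          ∑ s ∈ Finset.range (nn + 1),
            ((nn.choose s : k)) • A.prod (m + s) (A.prod (nn - s) a b) c) := by
  constructor
  · intro hL nn m a b c
    have := binom_inv (k := k) (C := C) (-1) (by ring)
      (fun n m => A.prod m (A.prod n a b) c)
      (fun n m => A.prod n a (A.prod m b c))
      (fun n m => hL n m a b c) nn m
    simpa using this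
  · intro hR nn m a b c
    have := binom_inv (k := k) (C := C) (1) (by ring)
      (fun n m => A.prod n a (A.prod m b c))
      (fun n m => A.prod m (A.prod n a b) c)
      (fun n m => by simpa using hR n m a b c) nn m
    simpa using this
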